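/- arXiv:math/0311111 — 2 statements merged into one kernel-verified Lean document; each statement's English description precedes it below -/
import Mathlib

section
/- Let F be a field, a, b, c ∈ F with appropriate nonvanishing. Define A(t) = (at−a+1)/a, B(t) = bt−t+1, k(t) = B(t)/(abt·A(t)), l(y) = 1 − k(c)/k(y). If y satisfies l(y) = 0 and y ≠ c, then y = −(ac−a+1)/(a(bc−c+1)) = −A(c)/B(c). Conversely, both y = c and y = −A(c)/B(c) satisfy l(y) = 0 (when defined). -/
theorem stmt5 {F : Type*} [Field F] (a b c : F) (A B k : F → F) (l : F → F)
    (hA : ∀ t, A t = (a * t - a + 1) / a)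
    (hB : ∀ t, B t = b * t - t + 1)
    (hk : ∀ t, k t = B t / (a * b * t * A t))
    (hl : ∀ t, l t = 1 - k c / k t)
    (ha : a ≠ 0) (hb : b ≠ 0) (hc : c ≠ 0)
    (hAc : A c ≠ 0) (hBc : B c ≠ 0) :
    (∀ y, y ≠ 0 → A y ≠ 0 → B y ≠ 0 → l y = 0 → y ≠ c →
        y = -(a * c - a + 1) / (a * (b * c - c + 1)) ∧ y = -A c / B c)
    ∧ l c = 0
    ∧ (-A c / B c ≠ 0 → A (-A c / B c) ≠ 0 → B (-A c / B c) ≠ 0 →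
        l (-A c / B c) = 0) := by
  have hBc' : b * c - c + 1 ≠ 0 := by rw [hB] at hBc; exact hBc
  have hkc : k c ≠ 0 := by
    rw [hk]
    exact div_ne_zero hBc (by simp [ha, hb, hc, hAc, mul_ne_zero])
  have key : ∀ y, y ≠ 0 → A y ≠ 0 → B y ≠ 0 → (l y = 0 ↔ k y = k c) := by
    intro y hy hAy hBy
    have hky : k y ≠ 0 := by
      rw [hk]
      exact div_ne_zero hBy (by simp [ha, hb, hy, hAy, mul_ne_zero])
    rw [hl, sub_eq_zero, eq_comm, div_eq_one_iff_eq hky, eq_comm]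
  have hiff : ∀ y, y ≠ 0 → A y ≠ 0 → B y ≠ 0 →
      (l y = 0 ↔ a * (b * ((y - c) * (a * (b * c - c + 1) * y + (a * c - a + 1)))) = 0) := by
    intro y hy hAy hBy
    rw [key y hy hAy hBy, hk, hk, div_eq_div_iff (by simp [ha, hb, hy, hAy, mul_ne_zero])
      (by simp [ha, hb, hc, hAc, mul_ne_zero]), hA, hA, hB, hB]
    constructor <;> intro h
    · field_simp at h
      linear_combination (-(a * b)) * h
    · have h' : (y - c) * (a * (b * c - c + 1) * y + (a * c - a + 1)) = 0 := by
        simpa [ha, hb] using h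
      field_simp
      linear_combination (-1 : F) * h'
  refine ⟨?_, ?_, ?_⟩
  · intro y hy hAy hBy hly hyc
    have h2ab := (hiff y hy hAy hBy).mp hly
    have h3 : a * (b * c - c + 1) * y + (a * c - a + 1) = 0 := by
      rcases mul_eq_zero.mp h2ab with h | h
      · exact absurd h ha
      rcases mul_eq_zero.mp h with h | h
      · exact absurd h hb
      rcases mul_eq_zero.mp h with h | h
      · exact absurd (sub_eq_zero.mp h) hyc
      · exact h
    have hd : a * (b * c - c + 1) ≠ 0 := mul_ne_zero ha hBc'
    have hy' : y = -(a * c - a + 1) / (a * (b * c - c + 1)) := by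
      rw [eq_div_iff hd]
      linear_combination h3
    refine ⟨hy', ?_⟩
    rw [hA, hB, hy']
    field_simp
  · rw [hl, div_self hkc, sub_self]
  · intro hy hAy hBy
    rw [hiff _ hy hAy hBy]
    have h0 : a * (b * c - c + 1) * (-A c / B c) + (a * c - a + 1) = 0 := by
      rw [show b * c - c + 1 = B c from (hB c).symm, hA c]
      field_simp
      ring
    rw [h0, mul_zero, mul_zero, mul_zero]
end

section
/- Let F be a field, a, b, c ∈ F all nonzero with bc − c + 1 ≠ 0 and ac − a + 1 ≠ 0. Define l₁(y) = 1 − y/c and l₂(y) = (y₂ − y)/(y₂·B(y)) where y₂ = −(ac−a+1)/(a(bc−c+1)), B(y) = by−y+1, A(t) = (at−a+1)/a, k(t) = B(t)/(abt·A(t)), and l(y) = 1 − k(c)/k(y). Then for all y with y ≠ 0, A(y) ≠ 0, B(y) ≠ 0: l₁(y)·l₂(y) = l(y), and l₁(0) = l₂(0) = 1. -/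
theorem stmt16 {F : Type*} [Field F] (a b c : F) (A B k l l₁ l₂ : F → F)
    (hA : ∀ t, A t = (a * t - a + 1) / a)
    (hB : ∀ t, B t = b * t - t + 1)
    (hk : ∀ t, k t = B t / (a * b * t * A t))
    (hl : ∀ t, l t = 1 - k c / k t)
    (hl1 : ∀ t, l₁ t = 1 - t / c)
    (hl2 : ∀ t, l₂ t = (-(a * c - a + 1) / (a * (b * c - c + 1)) - t)
        / ((-(a * c - a + 1) / (a * (b * c - c + 1))) * B t))
    (ha : a ≠ 0) (hb : b ≠ 0) (hc : c ≠ 0)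
    (hBc : b * c - c + 1 ≠ 0) (hAc : a * c - a + 1 ≠ 0) :
    (∀ y, y ≠ 0 → A y ≠ 0 → B y ≠ 0 → l₁ y * l₂ y = l y)
    ∧ l₁ 0 = 1 ∧ l₂ 0 = 1 := by
  refine ⟨fun y hy hAy hBy => ?_, ?_, ?_⟩
  · have hAy' : a * y - a + 1 ≠ 0 := by
      intro h; apply hAy; rw [hA, h, zero_div]
    have hBy' : b * y - y + 1 ≠ 0 := by rw [hB] at hBy; exact hBy
    have hky : k y = (b * y - y + 1) / (b * y * (a * y - a + 1)) := by
      rw [hk, hB, hA]; field_simp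
    have hkc : k c = (b * c - c + 1) / (b * c * (a * c - a + 1)) := by
      rw [hk, hB, hA]; field_simp
    rw [hl1, hl2, hl, hky, hkc, hB]
    have hap : a * (b * c - c + 1) ≠ 0 := mul_ne_zero ha hBc
    have h1 : -(a * c - a + 1) / (a * (b * c - c + 1)) - y
        = (-(a * c - a + 1) - a * (b * c - c + 1) * y) / (a * (b * c - c + 1)) := by
      rw [eq_div_iff hap, sub_mul, div_mul_cancel₀ _ hap]; ring
    have h2 : -(a * c - a + 1) / (a * (b * c - c + 1)) * (b * y - y + 1)
        = (-(a * c - a + 1) * (b * y - y + 1)) / (a * (b * c - c + 1)) := by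
      rw [div_mul_eq_mul_div]
    have e1 : (1 - y / c) * ((-(a * c - a + 1) / (a * (b * c - c + 1)) - y)
        / (-(a * c - a + 1) / (a * (b * c - c + 1)) * (b * y - y + 1)))
        = ((c - y) * ((a * c - a + 1) + a * (b * c - c + 1) * y))
          / (c * ((a * c - a + 1) * (b * y - y + 1))) := by
      rw [h1, h2, div_div_div_cancel_right₀ hap,
        show -(a * c - a + 1) - a * (b * c - c + 1) * y
          = -((a * c - a + 1) + a * (b * c - c + 1) * y) by ring,
        show -(a * c - a + 1) * (b * y - y + 1)
          = -((a * c - a + 1) * (b * y - y + 1)) by ring,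
        neg_div_neg_eq]
      have hqu : (a * c - a + 1) * (b * y - y + 1) ≠ 0 := mul_ne_zero hAc hBy'
      field_simp
    have e2 : 1 - (b * c - c + 1) / (b * c * (a * c - a + 1))
        / ((b * y - y + 1) / (b * y * (a * y - a + 1)))
        = ((c - y) * ((a * c - a + 1) + a * (b * c - c + 1) * y))
          / (c * ((a * c - a + 1) * (b * y - y + 1))) := by
      rw [div_div_div_eq, one_sub_div (mul_ne_zero (mul_ne_zero (mul_ne_zero hb hc) hAc) hBy'),
        div_eq_div_iff (mul_ne_zero (mul_ne_zero (mul_ne_zero hb hc) hAc) hBy')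
          (mul_ne_zero hc (mul_ne_zero hAc hBy'))]
      ring
    rw [e1, e2]
  · rw [hl1]; simp
  · rw [hl2, hB]
    simp only [mul_zero, sub_zero, zero_add, mul_one]
    exact div_self (div_ne_zero (neg_ne_zero.mpr hAc) (mul_ne_zero ha hBc))
end
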